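/- arXiv:math/9811030 — 2 statements merged into one kernel-verified Lean document; each statement's English description precedes it below -/
import Mathlib

section
/- Let f = x³ − y²z² and M as in the context. The operators −2xyz²∂_x − 3x³∂_y − 4yz² and −2xy²z∂_x − 3x³∂_z − 4y²z both annihilate x^{-2}·e^{1/f} in M. -/
open MvPolynomial

set_option maxHeartbeats 2000000

/-- For `f = x³ − y²z²`, in the rank-one free module over `A = K[x,y,z][1/(x·f)]` with basis
`g = e^{1/f}` and twisted action `∂_•(h·g) = (∂_•h − h·(∂_•f)/f²)·g`, the operators
`−2xyz²∂_x − 3x³∂_y − 4yz²` and `−2xy²z∂_x − 3x³∂_z − 4y²z` annihilate `x^{-2}·g`. The module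
is identified with `A` (`g ↦ 1`), `x⁻¹ = f·(xf)⁻¹`, `f⁻¹ = x·(xf)⁻¹`; `Dx, Dy, Dz` are the
derivations on `A` extending the partial derivatives; `x = X 0`, `y = X 1`, `z = X 2`. -/
theorem annihilators_of_xinv_sq_exp_inv {K : Type} [Field K] [CharZero K]
    (f : MvPolynomial (Fin 3) K) (hf : f = X 0 ^ 3 - X 1 ^ 2 * X 2 ^ 2)
    (Dx Dy Dz : Derivation K (Localization.Away (X 0 * f)) (Localization.Away (X 0 * f)))
    (hDx : ∀ p : MvPolynomial (Fin 3) K,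
      Dx (algebraMap (MvPolynomial (Fin 3) K) (Localization.Away (X 0 * f)) p) =
        algebraMap (MvPolynomial (Fin 3) K) (Localization.Away (X 0 * f)) (pderiv 0 p))
    (hDy : ∀ p : MvPolynomial (Fin 3) K,
      Dy (algebraMap (MvPolynomial (Fin 3) K) (Localization.Away (X 0 * f)) p) =
        algebraMap (MvPolynomial (Fin 3) K) (Localization.Away (X 0 * f)) (pderiv 1 p))
    (hDz : ∀ p : MvPolynomial (Fin 3) K,
      Dz (algebraMap (MvPolynomial (Fin 3) K) (Localization.Away (X 0 * f)) p) =
        algebraMap (MvPolynomial (Fin 3) K) (Localization.Away (X 0 * f)) (pderiv 2 p)) :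
    letI A := Localization.Away (X 0 * f)
    letI x := algebraMap (MvPolynomial (Fin 3) K) A (X 0)
    letI y := algebraMap (MvPolynomial (Fin 3) K) A (X 1)
    letI z := algebraMap (MvPolynomial (Fin 3) K) A (X 2)
    letI F := algebraMap (MvPolynomial (Fin 3) K) A f
    letI xinv := F * IsLocalization.Away.invSelf (S := A) (X 0 * f)
    letI finv := x * IsLocalization.Away.invSelf (S := A) (X 0 * f)
    letI h := xinv ^ 2
    letI Tx := Dx h - h * algebraMap (MvPolynomial (Fin 3) K) A (pderiv 0 f) * finv ^ 2
    letI Ty := Dy h - h * algebraMap (MvPolynomial (Fin 3) K) A (pderiv 1 f) * finv ^ 2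
    letI Tz := Dz h - h * algebraMap (MvPolynomial (Fin 3) K) A (pderiv 2 f) * finv ^ 2
    (-2 * x * y * z ^ 2 * Tx - 3 * x ^ 3 * Ty - 4 * y * z ^ 2 * h = 0) ∧
      (-2 * x * y ^ 2 * z * Tx - 3 * x ^ 3 * Tz - 4 * y ^ 2 * z * h = 0) := by

  set A := Localization.Away (X 0 * f) with hA
  set a : MvPolynomial (Fin 3) K →+* A := algebraMap (MvPolynomial (Fin 3) K) A with ha
  set u : A := IsLocalization.Away.invSelf (S := A) (X 0 * f) with hu'
  have hu : a (X 0 * f) * u = 1 := IsLocalization.Away.mul_invSelf _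
  have hDxu : Dx u = -u ^ 2 • Dx (a (X 0 * f)) :=
    Dx.leibniz_of_mul_eq_one ((mul_comm _ _).trans hu)
  have hDyu : Dy u = -u ^ 2 • Dy (a (X 0 * f)) :=
    Dy.leibniz_of_mul_eq_one ((mul_comm _ _).trans hu)
  have hDzu : Dz u = -u ^ 2 • Dz (a (X 0 * f)) :=
    Dz.leibniz_of_mul_eq_one ((mul_comm _ _).trans hu)
  set x : A := a (X 0) with hx
  set y : A := a (X 1) with hy
  set z : A := a (X 2) with hz
  have hfx : (pderiv 0 f : MvPolynomial (Fin 3) K) = 3 * X 0 ^ 2 := by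
    subst hf; simp [pderiv_X]; try ring
  have hfy : (pderiv 1 f : MvPolynomial (Fin 3) K) = -(2 * X 1 * X 2 ^ 2) := by
    subst hf; simp [pderiv_X]; try ring
  have hfz : (pderiv 2 f : MvPolynomial (Fin 3) K) = -(2 * X 1 ^ 2 * X 2) := by
    subst hf; simp [pderiv_X]; try ring
  have hPx : (pderiv 0 (X 0 * f) : MvPolynomial (Fin 3) K) = f + X 0 * (3 * X 0 ^ 2) := by
    simp [pderiv_mul, hfx]; try ring
  have hPy : (pderiv 1 (X 0 * f) : MvPolynomial (Fin 3) K) = X 0 * -(2 * X 1 * X 2 ^ 2) := by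
    simp [pderiv_mul, hfy]
  have hPz : (pderiv 2 (X 0 * f) : MvPolynomial (Fin 3) K) = X 0 * -(2 * X 1 ^ 2 * X 2) := by
    simp [pderiv_mul, hfz]
  -- express everything in terms of x, y, z, u
  have hF : a f = x ^ 3 - y ^ 2 * z ^ 2 := by
    have h1 : a f = a (X 0 ^ 3 - X 1 ^ 2 * X 2 ^ 2) := congrArg a hf
    rw [h1, map_sub, map_mul, map_pow, map_pow, map_pow]
  have hu2 : x * (x ^ 3 - y ^ 2 * z ^ 2) * u = 1 := by
    rw [← hF, ← map_mul]; exact hu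
  have eDx : Dx (a f * u) =
      a (3 * X 0 ^ 2) * u + a f * (-(u ^ 2) * (a f + x * a (3 * X 0 ^ 2))) := by
    rw [Derivation.leibniz, hDxu, hDx, hPx, hDx, hfx]
    simp only [smul_eq_mul]
    push_cast [map_add, map_mul]
    ring
  have eDy : Dy (a f * u) =
      a (-(2 * X 1 * X 2 ^ 2)) * u + a f * (-(u ^ 2) * (x * a (-(2 * X 1 * X 2 ^ 2)))) := by
    rw [Derivation.leibniz, hDyu, hDy, hPy, hDy, hfy]
    simp only [smul_eq_mul]
    push_cast [map_mul]
    ring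
  have eDz : Dz (a f * u) =
      a (-(2 * X 1 ^ 2 * X 2)) * u + a f * (-(u ^ 2) * (x * a (-(2 * X 1 ^ 2 * X 2)))) := by
    rw [Derivation.leibniz, hDzu, hDz, hPz, hDz, hfz]
    simp only [smul_eq_mul]
    push_cast [map_mul]
    ring
  have hDxh : Dx ((a f * u) ^ 2) = 2 * (a f * u) * Dx (a f * u) := by
    rw [Derivation.leibniz_pow]; simp only [smul_eq_mul]; push_cast []; ring
  have hDyh : Dy ((a f * u) ^ 2) = 2 * (a f * u) * Dy (a f * u) := by
    rw [Derivation.leibniz_pow]; simp only [smul_eq_mul]; push_cast []; ring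
  have hDzh : Dz ((a f * u) ^ 2) = 2 * (a f * u) * Dz (a f * u) := by
    rw [Derivation.leibniz_pow]; simp only [smul_eq_mul]; push_cast []; ring
  have hax : a (3 * X 0 ^ 2) = 3 * x ^ 2 := by
    push_cast [map_mul, map_pow, map_ofNat]
    rw [hx]
  have hay : a (-(2 * X 1 * X 2 ^ 2)) = -(2 * y * z ^ 2) := by
    push_cast [map_neg, map_mul, map_pow, map_ofNat]
    rw [hy, hz]
  have haz : a (-(2 * X 1 ^ 2 * X 2)) = -(2 * y ^ 2 * z) := by
    push_cast [map_neg, map_mul, map_pow, map_ofNat]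
    rw [hy, hz]
  constructor
  · rw [hDxh, hDyh, eDx, eDy, hfx, hfy, hax, hay, hF]
    linear_combination (4 * y * z ^ 2 * (x ^ 3 - y ^ 2 * z ^ 2) ^ 2 * u ^ 2) * hu2
  · rw [hDxh, hDzh, eDx, eDz, hfx, hfz, hax, haz, hF]
    linear_combination (4 * y ^ 2 * z * (x ^ 3 - y ^ 2 * z ^ 2) ^ 2 * u ^ 2) * hu2
end

section
/- In the second Weyl algebra D_v = K<x,v,∂_x,∂_v>, every element P can be written as a finite sum P = Σ ∂_v^a v^b p_{ab}(x) q_{ab}(∂_x − v²f'(x)∂_v) where p_{ab}, q_{ab} are polynomials over K and f ∈ K[x]; i.e., the elements {∂_v^a v^b x^c (∂_x − v²f'∂_v)^d : a,b,c,d ≥ 0} span D_v as a K-vector space. -/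
open MvPolynomial
set_option linter.unusedSectionVars false

namespace NormalFormAux

variable {K : Type} [Field K] [CharZero K]

noncomputable def μ (g : MvPolynomial (Fin 2) K) : Module.End K (MvPolynomial (Fin 2) K) :=
  LinearMap.mulLeft K g

noncomputable def Dx : Module.End K (MvPolynomial (Fin 2) K) := (pderiv (0 : Fin 2)).toLinearMap
noncomputable def Dv : Module.End K (MvPolynomial (Fin 2) K) := (pderiv (1 : Fin 2)).toLinearMap

lemma μ_apply (g p : MvPolynomial (Fin 2) K) : μ g p = g * p := rfl
lemma Dv_apply (p : MvPolynomial (Fin 2) K) : Dv p = pderiv 1 p := rfl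
lemma Dx_apply (p : MvPolynomial (Fin 2) K) : Dx p = pderiv 0 p := rfl

lemma μ_mul (g h : MvPolynomial (Fin 2) K) : μ (g * h) = μ g * μ h := by
  refine LinearMap.ext fun p => ?_; simp [μ_apply, Module.End.mul_apply, mul_assoc]

lemma μ_add (g h : MvPolynomial (Fin 2) K) : μ (g + h) = μ g + μ h := by
  refine LinearMap.ext fun p => ?_; simp [μ_apply, add_mul]

lemma μ_one : μ (1 : MvPolynomial (Fin 2) K) = 1 := by
  refine LinearMap.ext fun p => ?_; simp [μ_apply]

lemma μ_C (c : K) : μ (C c : MvPolynomial (Fin 2) K) = c • 1 := by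
  refine LinearMap.ext fun p => ?_; simp [μ_apply, C_mul']

lemma μ_pow (g : MvPolynomial (Fin 2) K) (n : ℕ) : μ (g ^ n) = μ g ^ n := by
  induction n with
  | zero => simpa using μ_one
  | succ n ih => rw [pow_succ, pow_succ, μ_mul, ih]

lemma Dv_μ (g : MvPolynomial (Fin 2) K) : Dv * μ g = μ g * Dv + μ (pderiv 1 g) := by
  refine LinearMap.ext fun p => ?_
  simp [Module.End.mul_apply, μ_apply, Dv_apply, pderiv_mul]; ring

lemma Dx_μ (g : MvPolynomial (Fin 2) K) : Dx * μ g = μ g * Dx + μ (pderiv 0 g) := by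
  refine LinearMap.ext fun p => ?_
  simp [Module.End.mul_apply, μ_apply, Dx_apply, pderiv_mul]; ring

lemma Dx_Dv : (Dx : Module.End K (MvPolynomial (Fin 2) K)) * Dv = Dv * Dx := by
  refine LinearMap.ext fun p => ?_
  simp only [Module.End.mul_apply, Dx_apply, Dv_apply]
  induction p using MvPolynomial.induction_on with
  | C c => simp [pderiv_C]
  | add p q hp hq => simp [hp, hq]
  | mul_X p n hp =>
    fin_cases n <;>
      simp [pderiv_mul, hp, pderiv_X_self, pderiv_X_of_ne] <;> ring

variable (f : Polynomial K)

noncomputable def m : MvPolynomial (Fin 2) K :=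
  (X 1 : MvPolynomial (Fin 2) K) ^ 2 *
    Polynomial.aeval (X 0 : MvPolynomial (Fin 2) K) (Polynomial.derivative f)

noncomputable def Q : Module.End K (MvPolynomial (Fin 2) K) := Dx - μ (m f) * Dv

lemma μ_sub (g h : MvPolynomial (Fin 2) K) : μ (g - h) = μ g - μ h := by
  refine LinearMap.ext fun p => ?_; simp [μ_apply, sub_mul]

lemma μ_comm (a b : MvPolynomial (Fin 2) K) : μ a * μ b = μ b * μ a := by
  rw [← μ_mul, ← μ_mul, mul_comm]

lemma Q_μ (g : MvPolynomial (Fin 2) K) :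
    Q f * μ g = μ g * Q f + μ (pderiv 0 g - m f * pderiv 1 g) := by
  rw [Q, sub_mul, Dx_μ, mul_assoc, Dv_μ, mul_add, ← mul_assoc, μ_comm (m f) g,
    mul_assoc, ← μ_mul, μ_sub, mul_sub]
  noncomm_ring

lemma Dv_Q : Dv * Q f = Q f * Dv - μ (pderiv 1 (m f)) * Dv := by
  have h2 := Dv_μ (K := K) (m f)
  simp only [Q, mul_sub, sub_mul, ← mul_assoc, h2, Dx_Dv, add_mul]
  noncomm_ring

lemma Dx_eq : Dx = Q f + μ (m f) * Dv := by simp [Q]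

-- power commutators
lemma Dv_pow_vv (a : ℕ) :
    Dv ^ (a + 1) * μ (X 1 : MvPolynomial (Fin 2) K)
      = μ (X 1) * Dv ^ (a + 1) + ((a : K) + 1) • Dv ^ a := by
  induction a with
  | zero =>
    simpa [pderiv_X_self, μ_one] using Dv_μ (K := K) (X 1)
  | succ a ih =>
    have h1 : Dv ^ (a + 2) * μ (X 1 : MvPolynomial (Fin 2) K)
        = Dv * (Dv ^ (a + 1) * μ (X 1)) := by rw [← mul_assoc, ← pow_succ']
    rw [h1, ih, mul_add, ← mul_assoc, Dv_μ (K := K) (X 1), pderiv_X_self, μ_one,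
      add_mul, one_mul, mul_assoc, ← pow_succ', mul_smul_comm, ← pow_succ']
    push_cast
    module

lemma Dx_xx_pow (c : ℕ) :
    Dx * μ (X 0 : MvPolynomial (Fin 2) K) ^ (c + 1)
      = μ (X 0) ^ (c + 1) * Dx + ((c : K) + 1) • μ (X 0) ^ c := by
  induction c with
  | zero =>
    simpa [pderiv_X_self, μ_one] using Dx_μ (K := K) (X 0)
  | succ c ih =>
    have h1 : Dx * μ (X 0 : MvPolynomial (Fin 2) K) ^ (c + 2)
        = Dx * μ (X 0) ^ (c + 1) * μ (X 0) := by rw [mul_assoc, ← pow_succ]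
    rw [h1, ih, add_mul, mul_assoc, Dx_μ (K := K) (X 0), pderiv_X_self, μ_one,
      mul_add, mul_one, ← mul_assoc, ← pow_succ, smul_mul_assoc, ← pow_succ]
    push_cast
    module

lemma μ_zero : μ (0 : MvPolynomial (Fin 2) K) = 0 := by
  refine LinearMap.ext fun p => ?_; simp [μ_apply]

lemma commute_Dv_xx : Commute Dv (μ (X 0 : MvPolynomial (Fin 2) K)) := by
  have := Dv_μ (K := K) (X 0)
  rw [pderiv_X_of_ne (by decide)] at this
  simpa [Commute, SemiconjBy, μ_zero] using this

lemma commute_Dx_vv : Commute Dx (μ (X 1 : MvPolynomial (Fin 2) K)) := by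
  have := Dx_μ (K := K) (X 1)
  rw [pderiv_X_of_ne (by decide)] at this
  simpa [Commute, SemiconjBy, μ_zero] using this

lemma commute_Dx_Dv : Commute (Dx : Module.End K (MvPolynomial (Fin 2) K)) Dv :=
  Dx_Dv

lemma commute_xx_vv :
    Commute (μ (X 0 : MvPolynomial (Fin 2) K)) (μ (X 1 : MvPolynomial (Fin 2) K)) :=
  μ_comm _ _

noncomputable def S : Submodule K (Module.End K (MvPolynomial (Fin 2) K)) :=
  Submodule.span K
    (Set.range fun t : ℕ × ℕ × ℕ × ℕ =>
      Dv ^ t.1 * μ (X 1 : MvPolynomial (Fin 2) K) ^ t.2.1 *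
        μ (X 0 : MvPolynomial (Fin 2) K) ^ t.2.2.1 * Q f ^ t.2.2.2)

lemma mem_S (a b c d : ℕ) :
    Dv ^ a * μ (X 1 : MvPolynomial (Fin 2) K) ^ b * μ (X 0) ^ c * Q f ^ d ∈ S f :=
  Submodule.subset_span ⟨(a, b, c, d), rfl⟩

lemma mul_span_le {T : Module.End K (MvPolynomial (Fin 2) K)}
    {s : Set (Module.End K (MvPolynomial (Fin 2) K))}
    {N : Submodule K (Module.End K (MvPolynomial (Fin 2) K))}
    (h : ∀ y ∈ s, T * y ∈ N) : ∀ x ∈ Submodule.span K s, T * x ∈ N := by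
  intro x hx
  induction hx using Submodule.span_induction with
  | mem y hy => exact h y hy
  | zero => simpa using N.zero_mem
  | add a b _ _ ha hb => simpa [mul_add] using N.add_mem ha hb
  | smul c a _ ha => simpa [mul_smul_comm] using N.smul_mem c ha

lemma mul4_left_comm {x A B y z : Module.End K (MvPolynomial (Fin 2) K)}
    (h1 : Commute x A) (h2 : Commute x B) :
    x * (A * B * y * z) = A * B * (x * y) * z := by
  have h3 : x * (A * B) = A * B * x := (h1.mul_right h2).eq
  calc x * (A * B * y * z) = (x * (A * B)) * y * z := by simp only [mul_assoc]
    _ = (A * B * x) * y * z := by rw [h3]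
    _ = A * B * (x * y) * z := by simp only [mul_assoc]

lemma xx_mul_mem : ∀ x ∈ S f, μ (X 0 : MvPolynomial (Fin 2) K) * x ∈ S f := by
  apply mul_span_le
  rintro y ⟨⟨a, b, c, d⟩, rfl⟩
  simp only
  rw [mul4_left_comm (commute_Dv_xx.symm.pow_right a) (commute_xx_vv.pow_right b),
    ← pow_succ']
  exact mem_S f a b (c + 1) d

lemma vv_mul_mem : ∀ x ∈ S f, μ (X 1 : MvPolynomial (Fin 2) K) * x ∈ S f := by
  apply mul_span_le
  rintro y ⟨⟨a, b, c, d⟩, rfl⟩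
  simp only
  cases a with
  | zero =>
    simp only [pow_zero, one_mul, ← mul_assoc, ← pow_succ']
    simpa using mem_S f 0 (b + 1) c d
  | succ a =>
    have hcomm : μ (X 1 : MvPolynomial (Fin 2) K) * Dv ^ (a + 1)
        = Dv ^ (a + 1) * μ (X 1) - ((a : K) + 1) • Dv ^ a :=
      eq_sub_of_add_eq (Dv_pow_vv (K := K) a).symm
    simp only [← mul_assoc]
    rw [hcomm, sub_mul, sub_mul, sub_mul]
    simp only [smul_mul_assoc, mul_assoc (Dv ^ (a + 1)), ← pow_succ']
    simp only [← mul_assoc]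
    exact sub_mem (mem_S f (a + 1) (b + 1) c d)
      (Submodule.smul_mem _ _ (mem_S f a b c d))

lemma dv_mul_mem : ∀ x ∈ S f, Dv * x ∈ S f := by
  apply mul_span_le
  rintro y ⟨⟨a, b, c, d⟩, rfl⟩
  simp only [← mul_assoc, ← pow_succ']
  exact mem_S f (a + 1) b c d

lemma key (G : MvPolynomial (Fin 2) K) : ∀ a e : ℕ, Dv ^ a * μ G * Q f ^ e ∈ S f := by
  induction G using MvPolynomial.induction_on with
  | C c =>
    intro a e
    rw [μ_C]
    have h : Dv ^ a * (c • (1 : Module.End K (MvPolynomial (Fin 2) K))) * Q f ^ e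
        = c • (Dv ^ a * μ (X 1) ^ 0 * μ (X 0) ^ 0 * Q f ^ e) := by
      simp [mul_smul_comm, smul_mul_assoc]
    rw [h]
    exact Submodule.smul_mem _ _ (mem_S f a 0 0 e)
  | add p q hp hq =>
    intro a e
    rw [μ_add, mul_add, add_mul]
    exact add_mem (hp a e) (hq a e)
  | mul_X p n hp =>
    intro a e
    fin_cases n
    · change Dv ^ a * μ (p * X 0) * Q f ^ e ∈ S f
      have h0 : μ (p * X 0) = μ (X (0 : Fin 2)) * μ p := by rw [← μ_mul, mul_comm]
      rw [h0]
      have h : Dv ^ a * (μ (X (0 : Fin 2)) * μ p) * Q f ^ e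
          = μ (X (0 : Fin 2)) * (Dv ^ a * μ p * Q f ^ e) := by
        rw [← mul_assoc, (commute_Dv_xx.pow_left a).eq]
        simp only [mul_assoc]
      rw [h]
      exact xx_mul_mem f _ (hp a e)
    · change Dv ^ a * μ (p * X 1) * Q f ^ e ∈ S f
      have h0 : μ (p * X 1) = μ (X (1 : Fin 2)) * μ p := by rw [← μ_mul, mul_comm]
      rw [h0]
      cases a with
      | zero =>
        have h1 := hp 0 e
        simp only [pow_zero, one_mul] at h1 ⊢
        rw [mul_assoc]
        exact vv_mul_mem f _ h1
      | succ a =>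
        have h : Dv ^ (a + 1) * (μ (X (1 : Fin 2)) * μ p) * Q f ^ e
            = μ (X (1 : Fin 2)) * (Dv ^ (a + 1) * μ p * Q f ^ e)
              + ((a : K) + 1) • (Dv ^ a * μ p * Q f ^ e) := by
          rw [← mul_assoc, Dv_pow_vv]
          simp only [add_mul, smul_mul_assoc, mul_assoc]
        rw [h]
        exact add_mem (vv_mul_mem f _ (hp (a + 1) e))
          (Submodule.smul_mem _ _ (hp a e))

lemma L2 (a : ℕ) (G : MvPolynomial (Fin 2) K) (e : ℕ) :
    Dv ^ a * μ G * Dv * Q f ^ e ∈ S f := by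
  have hG : μ G * Dv = Dv * μ G - μ (pderiv 1 G) := eq_sub_of_add_eq (Dv_μ G).symm
  have h : Dv ^ a * μ G * Dv * Q f ^ e
      = Dv ^ (a + 1) * μ G * Q f ^ e - Dv ^ a * μ (pderiv 1 G) * Q f ^ e := by
    rw [mul_assoc (Dv ^ a), hG, mul_sub, sub_mul]
    simp only [← mul_assoc, ← pow_succ]
  rw [h]
  exact sub_mem (key f G (a + 1) e) (key f (pderiv 1 G) a e)

noncomputable def T : Submodule K (Module.End K (MvPolynomial (Fin 2) K)) :=
  Submodule.span K
    (Set.range fun p : MvPolynomial (Fin 2) K × ℕ => μ p.1 * Dv * Q f ^ p.2)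

lemma mem_T (h : MvPolynomial (Fin 2) K) (e : ℕ) : μ h * Dv * Q f ^ e ∈ T f :=
  Submodule.subset_span ⟨(h, e), rfl⟩

lemma μ_mul_T (g : MvPolynomial (Fin 2) K) : ∀ x ∈ T f, μ g * x ∈ T f := by
  apply mul_span_le
  rintro y ⟨⟨h, e⟩, rfl⟩
  simp only
  rw [← mul_assoc, ← mul_assoc, ← μ_mul]
  exact mem_T f (g * h) e

lemma ring_helper {R : Type*} [Ring R] {Qq A B C Dvv : R} (P : R)
    (h1 : Qq * A = A * Qq + B) (h2 : Qq * Dvv = Dvv * Qq + C * Dvv) :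
    Qq * (A * Dvv * P) = A * Dvv * (Qq * P) + (B * Dvv * P + A * (C * Dvv) * P) := by
  have e1 : Qq * (A * Dvv * P) = ((Qq * A) * Dvv) * P := by simp only [mul_assoc]
  rw [e1, h1, add_mul, add_mul, mul_assoc A Qq Dvv, h2]
  simp only [mul_add, add_mul, mul_assoc]
  abel

lemma Q_mul_T : ∀ x ∈ T f, Q f * x ∈ T f := by
  have hQDv : Q f * Dv = Dv * Q f + μ (pderiv 1 (m f)) * Dv := by
    rw [Dv_Q, sub_add_cancel]
  apply mul_span_le
  rintro y ⟨⟨h, e⟩, rfl⟩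
  simp only
  rw [ring_helper (Q f ^ e) (Q_μ f h) hQDv, ← pow_succ']
  refine add_mem (mem_T f h (e + 1)) (add_mem (mem_T f _ e) ?_)
  have h2 : μ h * (μ (pderiv 1 (m f)) * Dv) * Q f ^ e
      = μ (h * pderiv 1 (m f)) * Dv * Q f ^ e := by
    rw [μ_mul]; simp only [mul_assoc]
  rw [h2]
  exact mem_T f _ e

lemma Dv_Qpow_mem_T (d : ℕ) : Dv * Q f ^ d ∈ T f := by
  induction d with
  | zero => simpa [μ_one] using mem_T f 1 0
  | succ d ih =>
    have h : Dv * Q f ^ (d + 1)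
        = Q f * (Dv * Q f ^ d) - μ (pderiv 1 (m f)) * (Dv * Q f ^ d) := by
      rw [pow_succ', ← mul_assoc, Dv_Q, sub_mul]
      simp only [mul_assoc]
    rw [h]
    exact sub_mem (Q_mul_T f _ ih) (μ_mul_T f _ _ ih)

lemma DvμG_T (a : ℕ) (G : MvPolynomial (Fin 2) K) :
    ∀ x ∈ T f, Dv ^ a * μ G * x ∈ S f := by
  apply mul_span_le
  rintro y ⟨⟨h, e⟩, rfl⟩
  simp only
  have heq : Dv ^ a * μ G * (μ h * Dv * Q f ^ e) = Dv ^ a * μ (G * h) * Dv * Q f ^ e := by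
    rw [μ_mul]; simp only [mul_assoc]
  rw [heq]
  exact L2 f a (G * h) e

lemma core (a b c d : ℕ) :
    Dv ^ a * μ (X 1 : MvPolynomial (Fin 2) K) ^ b * μ (X 0) ^ c * (Dx * Q f ^ d) ∈ S f := by
  have hDx : Dx * Q f ^ d = Q f ^ (d + 1) + μ (m f) * (Dv * Q f ^ d) := by
    rw [Dx_eq f, add_mul, ← pow_succ', mul_assoc]
  rw [hDx, mul_add]
  refine add_mem (mem_S f a b c (d + 1)) ?_
  have heq : Dv ^ a * μ (X 1 : MvPolynomial (Fin 2) K) ^ b * μ (X 0) ^ c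
        * (μ (m f) * (Dv * Q f ^ d))
      = Dv ^ a * μ (X 1 ^ b * (X 0 ^ c * m f)) * (Dv * Q f ^ d) := by
    simp only [μ_mul, μ_pow]; simp only [mul_assoc]
  rw [heq]
  exact DvμG_T f a _ _ (Dv_Qpow_mem_T f d)

lemma dx_mul_mem : ∀ x ∈ S f, Dx * x ∈ S f := by
  apply mul_span_le
  rintro y ⟨⟨a, b, c, d⟩, rfl⟩
  simp only
  rw [mul4_left_comm (commute_Dx_Dv.pow_right a) (commute_Dx_vv.pow_right b)]
  cases c with
  | zero =>
    have h := core f a b 0 d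
    simp only [pow_zero, mul_one] at h ⊢
    simpa only [mul_assoc] using h
  | succ c =>
    rw [Dx_xx_pow, mul_add, add_mul]
    refine add_mem ?_ ?_
    · have h2 : Dv ^ a * μ (X 1 : MvPolynomial (Fin 2) K) ^ b * (μ (X 0) ^ (c + 1) * Dx)
          * Q f ^ d
          = Dv ^ a * μ (X 1) ^ b * μ (X 0) ^ (c + 1) * (Dx * Q f ^ d) := by
        simp only [mul_assoc]
      rw [h2]
      exact core f a b (c + 1) d
    · have h3 : Dv ^ a * μ (X 1 : MvPolynomial (Fin 2) K) ^ b
          * (((c : K) + 1) • μ (X 0) ^ c) * Q f ^ d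
          = ((c : K) + 1) • (Dv ^ a * μ (X 1) ^ b * μ (X 0) ^ c * Q f ^ d) := by
        simp only [mul_smul_comm, smul_mul_assoc]
      rw [h3]
      exact Submodule.smul_mem _ _ (mem_S f a b c d)

theorem main_aux :
    Subalgebra.toSubmodule (Algebra.adjoin K
        ({μ (X 0), μ (X 1), Dx, Dv} : Set (Module.End K (MvPolynomial (Fin 2) K))))
      ≤ S f := by
  rw [Algebra.adjoin_eq_span, Submodule.span_le]
  intro w hw
  replace hw : w ∈ Submonoid.closure
      ({μ (X 0), μ (X 1), Dx, Dv} : Set (Module.End K (MvPolynomial (Fin 2) K))) := hw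
  change w ∈ S f
  induction hw using Submonoid.closure_induction_left with
  | one => simpa using mem_S f 0 0 0 0
  | mul_left x hx y hy ih =>
    simp only [Set.mem_insert_iff, Set.mem_singleton_iff] at hx
    rcases hx with rfl | rfl | rfl | rfl
    · exact xx_mul_mem f y ih
    · exact vv_mul_mem f y ih
    · exact dx_mul_mem f y ih
    · exact dv_mul_mem f y ih

end NormalFormAux

set_option synthInstance.maxHeartbeats 400000
set_option maxHeartbeats 1000000

/-- In the second Weyl algebra `D_v = K<x,v,∂_x,∂_v>` (realized faithfully, `char K = 0`, as
operators on `K[x,v]` with `x = X 0`, `v = X 1`), the monomials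
`∂_v^a v^b x^c (∂_x − v²f'∂_v)^d` span `D_v` as a `K`-vector space. -/
theorem normal_form_spanning {K : Type} [Field K] [CharZero K] (f : Polynomial K) :
    letI xx : Module.End K (MvPolynomial (Fin 2) K) := LinearMap.mulLeft K (X 0)
    letI vv : Module.End K (MvPolynomial (Fin 2) K) := LinearMap.mulLeft K (X 1)
    letI dx : Module.End K (MvPolynomial (Fin 2) K) := (pderiv (0 : Fin 2)).toLinearMap
    letI dv : Module.End K (MvPolynomial (Fin 2) K) := (pderiv (1 : Fin 2)).toLinearMap
    letI q : Module.End K (MvPolynomial (Fin 2) K) :=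
      dx - LinearMap.mulLeft K
        ((X 1 : MvPolynomial (Fin 2) K) ^ 2 *
          Polynomial.aeval (X 0 : MvPolynomial (Fin 2) K) (Polynomial.derivative f)) * dv
    Subalgebra.toSubmodule (Algebra.adjoin K ({xx, vv, dx, dv} : Set _)) ≤
      Submodule.span K
        (Set.range fun t : ℕ × ℕ × ℕ × ℕ =>
          dv ^ t.1 * vv ^ t.2.1 * xx ^ t.2.2.1 * q ^ t.2.2.2) := by
  exact NormalFormAux.main_aux f
end
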